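/- arXiv:2503.20462 — 2 statements merged into one kernel-verified Lean document; each statement's English description precedes it below -/
import Mathlib

section
/- Simulation lemma (value difference under model mismatch): for two transition kernels T and T̃ on a finite MDP, any policy π, and reward bounded so that the value function under T̃ satisfies |V_{T̃}^π(s)| ≤ C for all s, the value difference satisfies |V_T^π - V_{T̃}^π| ≤ (2Cγ/(1-γ))·E_{(s,a)∼d_T^π}[TV(T(·|s,a), T̃(·|s,a))], where d_T^π is the normalized discounted state-action occupancy measure under T and π, and TV is total variation distance. -/
open Finset

variable {S A : Type*}

/-- One step of the state-distribution evolution under kernel `T` and policy `π`. -/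
noncomputable def stepDist [Fintype S] [Fintype A]
    (T : S → A → S → ℝ) (π : S → A → ℝ) (p : S → ℝ) : S → ℝ :=
  fun s' => ∑ s, ∑ a, p s * π s a * T s a s'

/-- State distribution at time `t` starting from `μ0`. -/
noncomputable def stateDist [Fintype S] [Fintype A]
    (T : S → A → S → ℝ) (π : S → A → ℝ) (μ0 : S → ℝ) : ℕ → S → ℝ :=
  fun t => (stepDist T π)^[t] μ0

/-- Discounted value `V_T^π = E[∑ γ^t r]` with initial distribution `μ0`. -/
noncomputable def value [Fintype S] [Fintype A]
    (T : S → A → S → ℝ) (π : S → A → ℝ) (μ0 : S → ℝ) (r : S → A → ℝ) (γ : ℝ) : ℝ :=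
  ∑' t : ℕ, γ ^ t * ∑ s, ∑ a, stateDist T π μ0 t s * π s a * r s a

/-- Normalized discounted state-action occupancy measure. -/
noncomputable def occupancy [Fintype S] [Fintype A]
    (T : S → A → S → ℝ) (π : S → A → ℝ) (μ0 : S → ℝ) (γ : ℝ) : S → A → ℝ :=
  fun s a => (1 - γ) * ∑' t : ℕ, γ ^ t * stateDist T π μ0 t s * π s a

/-- Total variation distance between two distributions on a finite set. -/
noncomputable def tvDist [Fintype S] (P Q : S → ℝ) : ℝ :=
  (1 / 2) * ∑ s', |P s' - Q s'|

/-- Dirac initial distribution at `s`. -/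
noncomputable def dirac [DecidableEq S] (s : S) : S → ℝ :=
  fun s' => if s' = s then 1 else 0

/-! ### Auxiliary lemmas -/

lemma sum_comm3 [Fintype S] [Fintype A] (F : S → A → S → ℝ) :
    ∑ x : S, ∑ a : A, ∑ s : S, F x a s = ∑ s : S, ∑ x : S, ∑ a : A, F x a s := by
  rw [show (∑ x : S, ∑ a : A, ∑ s : S, F x a s) = ∑ x : S, ∑ s : S, ∑ a : A, F x a s from
    Finset.sum_congr rfl fun x _ => Finset.sum_comm]
  exact Finset.sum_comm

lemma stepDist_nonneg [Fintype S] [Fintype A]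
    (T : S → A → S → ℝ) (π : S → A → ℝ) (p : S → ℝ)
    (hπ0 : ∀ s a, 0 ≤ π s a) (hT0 : ∀ s a s', 0 ≤ T s a s') (hp : ∀ s, 0 ≤ p s) :
    ∀ s', 0 ≤ stepDist T π p s' := by
  intro s'
  refine Finset.sum_nonneg fun s _ => Finset.sum_nonneg fun a _ => ?_
  exact mul_nonneg (mul_nonneg (hp s) (hπ0 s a)) (hT0 s a s')

lemma stepDist_sum [Fintype S] [Fintype A]
    (T : S → A → S → ℝ) (π : S → A → ℝ) (p : S → ℝ)
    (hπ1 : ∀ s, ∑ a, π s a = 1) (hT1 : ∀ s a, ∑ s', T s a s' = 1) :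
    ∑ s', stepDist T π p s' = ∑ s, p s := by
  unfold stepDist
  rw [Finset.sum_comm]
  refine Finset.sum_congr rfl fun s _ => ?_
  rw [Finset.sum_comm]
  simp_rw [mul_assoc, ← Finset.mul_sum, hT1, mul_one, hπ1, mul_one]

lemma stateDist_succ [Fintype S] [Fintype A]
    (T : S → A → S → ℝ) (π : S → A → ℝ) (μ0 : S → ℝ) (t : ℕ) :
    stateDist T π μ0 (t + 1) = stepDist T π (stateDist T π μ0 t) := by
  simp [stateDist, Function.iterate_succ_apply']

lemma stateDist_succ' [Fintype S] [Fintype A]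
    (T : S → A → S → ℝ) (π : S → A → ℝ) (μ0 : S → ℝ) (t : ℕ) :
    stateDist T π μ0 (t + 1) = stateDist T π (stepDist T π μ0) t := by
  simp [stateDist, Function.iterate_succ_apply]

lemma stateDist_nonneg [Fintype S] [Fintype A]
    (T : S → A → S → ℝ) (π : S → A → ℝ) (μ0 : S → ℝ)
    (hπ0 : ∀ s a, 0 ≤ π s a) (hT0 : ∀ s a s', 0 ≤ T s a s') (hp : ∀ s, 0 ≤ μ0 s) :
    ∀ t s, 0 ≤ stateDist T π μ0 t s := by
  intro t
  induction t with
  | zero => exact hp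
  | succ n ih => rw [stateDist_succ]; exact stepDist_nonneg T π _ hπ0 hT0 ih

lemma stateDist_sum [Fintype S] [Fintype A]
    (T : S → A → S → ℝ) (π : S → A → ℝ) (μ0 : S → ℝ)
    (hπ1 : ∀ s, ∑ a, π s a = 1) (hT1 : ∀ s a, ∑ s', T s a s' = 1) (hp : ∑ s, μ0 s = 1) :
    ∀ t, ∑ s, stateDist T π μ0 t s = 1 := by
  intro t
  induction t with
  | zero => exact hp
  | succ n ih => rw [stateDist_succ, stepDist_sum T π _ hπ1 hT1]; exact ih

lemma summable_geom_of_bound {γ M : ℝ} (hγ0 : 0 ≤ γ) (hγ1 : γ < 1) (f : ℕ → ℝ)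
    (h : ∀ n, |f n| ≤ M * γ ^ n) : Summable f := by
  refine Summable.of_norm_bounded ((summable_geometric_of_lt_one hγ0 hγ1).mul_left M) ?_
  simpa using h

lemma dist_dot_bound [Fintype S] (p v : S → ℝ) (C : ℝ)
    (hp0 : ∀ s, 0 ≤ p s) (hp1 : ∑ s, p s = 1) (hv : ∀ s, |v s| ≤ C) :
    |∑ s, p s * v s| ≤ C := by
  calc |∑ s, p s * v s| ≤ ∑ s, |p s * v s| := Finset.abs_sum_le_sum_abs _ _
    _ ≤ ∑ s, p s * C := by
        refine Finset.sum_le_sum fun s _ => ?_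
        rw [abs_mul, abs_of_nonneg (hp0 s)]
        exact mul_le_mul_of_nonneg_left (hv s) (hp0 s)
    _ = C := by rw [← Finset.sum_mul, hp1, one_mul]

/-- For distributions `p`, `π`, the one-step expected reward is bounded by `∑∑|r|`. -/
lemma reward_bound [Fintype S] [Fintype A] (p : S → ℝ) (π : S → A → ℝ) (r : S → A → ℝ)
    (hp0 : ∀ s, 0 ≤ p s) (hp1 : ∑ s, p s = 1)
    (hπ0 : ∀ s a, 0 ≤ π s a) (hπ1 : ∀ s, ∑ a, π s a = 1) :
    |∑ s, ∑ a, p s * π s a * r s a| ≤ ∑ s, ∑ a, |r s a| := by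
  have hM : ∀ s a, |r s a| ≤ ∑ s, ∑ a, |r s a| := by
    intro s a
    calc |r s a| ≤ ∑ a, |r s a| :=
          Finset.single_le_sum (fun a _ => abs_nonneg (r s a)) (Finset.mem_univ a)
      _ ≤ ∑ s, ∑ a, |r s a| :=
          Finset.single_le_sum
            (fun s _ => Finset.sum_nonneg fun a _ => abs_nonneg (r s a)) (Finset.mem_univ s)
  have h1 : ∀ s, |∑ a, π s a * r s a| ≤ ∑ s, ∑ a, |r s a| := fun s =>
    dist_dot_bound (π s) (r s) _ (hπ0 s) (hπ1 s) (hM s)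
  calc |∑ s, ∑ a, p s * π s a * r s a| = |∑ s, p s * ∑ a, π s a * r s a| := by
        simp_rw [Finset.mul_sum, mul_assoc]
    _ ≤ ∑ s, ∑ a, |r s a| := dist_dot_bound p _ _ hp0 hp1 h1

lemma value_summable [Fintype S] [Fintype A]
    (T : S → A → S → ℝ) (π : S → A → ℝ) (p : S → ℝ) (r : S → A → ℝ) {γ : ℝ}
    (hγ0 : 0 ≤ γ) (hγ1 : γ < 1)
    (hp0 : ∀ s, 0 ≤ p s) (hp1 : ∑ s, p s = 1)
    (hπ0 : ∀ s a, 0 ≤ π s a) (hπ1 : ∀ s, ∑ a, π s a = 1)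
    (hT0 : ∀ s a s', 0 ≤ T s a s') (hT1 : ∀ s a, ∑ s', T s a s' = 1) :
    Summable (fun t => γ ^ t * ∑ s, ∑ a, stateDist T π p t s * π s a * r s a) := by
  refine summable_geom_of_bound (M := ∑ s, ∑ a, |r s a|) hγ0 hγ1 _ (fun n => ?_)
  rw [abs_mul, abs_pow, abs_of_nonneg hγ0, mul_comm]
  refine mul_le_mul_of_nonneg_right ?_ (pow_nonneg hγ0 n)
  exact reward_bound _ π r (stateDist_nonneg T π p hπ0 hT0 hp0 n)
    (stateDist_sum T π p hπ1 hT1 hp1 n) hπ0 hπ1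

/-- Bellman-type recursion for the value function. -/
lemma value_bellman [Fintype S] [Fintype A]
    (T : S → A → S → ℝ) (π : S → A → ℝ) (p : S → ℝ) (r : S → A → ℝ) {γ : ℝ}
    (hγ0 : 0 ≤ γ) (hγ1 : γ < 1)
    (hp0 : ∀ s, 0 ≤ p s) (hp1 : ∑ s, p s = 1)
    (hπ0 : ∀ s a, 0 ≤ π s a) (hπ1 : ∀ s, ∑ a, π s a = 1)
    (hT0 : ∀ s a s', 0 ≤ T s a s') (hT1 : ∀ s a, ∑ s', T s a s' = 1) :
    value T π p r γ = (∑ s, ∑ a, p s * π s a * r s a)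
      + γ * value T π (stepDist T π p) r γ := by
  have hsum := value_summable T π p r hγ0 hγ1 hp0 hp1 hπ0 hπ1 hT0 hT1
  unfold value
  rw [Summable.tsum_eq_zero_add hsum]
  congr 1
  · simp [stateDist]
  · rw [← tsum_mul_left]
    congr 1
    funext t
    rw [stateDist_succ', pow_succ]
    ring

lemma dirac_nonneg [DecidableEq S] (s s' : S) : 0 ≤ dirac s s' := by
  unfold dirac; split <;> norm_num

lemma dirac_sum [Fintype S] [DecidableEq S] (s : S) : ∑ s', dirac s s' = 1 := by
  simp [dirac]

/-- Linearity of the state distribution in the initial distribution. -/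
lemma stateDist_linear [Fintype S] [Fintype A] [DecidableEq S]
    (T : S → A → S → ℝ) (π : S → A → ℝ) (p : S → ℝ) (t : ℕ) (s' : S) :
    stateDist T π p t s' = ∑ s, p s * stateDist T π (dirac s) t s' := by
  induction t generalizing s' with
  | zero => simp [stateDist, dirac, mul_ite, Finset.sum_ite_eq]
  | succ n ih =>
    rw [stateDist_succ]
    simp_rw [stateDist_succ]
    unfold stepDist
    simp_rw [ih, Finset.sum_mul, Finset.mul_sum, mul_assoc]
    exact sum_comm3 _

/-- Linearity of the value function in the initial distribution. -/
lemma value_linear [Fintype S] [Fintype A] [DecidableEq S]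
    (T : S → A → S → ℝ) (π : S → A → ℝ) (p : S → ℝ) (r : S → A → ℝ) {γ : ℝ}
    (hγ0 : 0 ≤ γ) (hγ1 : γ < 1)
    (hπ0 : ∀ s a, 0 ≤ π s a) (hπ1 : ∀ s, ∑ a, π s a = 1)
    (hT0 : ∀ s a s', 0 ≤ T s a s') (hT1 : ∀ s a, ∑ s', T s a s' = 1) :
    value T π p r γ = ∑ s, p s * value T π (dirac s) r γ := by
  unfold value
  have key : ∀ t, γ ^ t * ∑ x, ∑ a, stateDist T π p t x * π x a * r x a
      = ∑ s, p s * (γ ^ t * ∑ x, ∑ a, stateDist T π (dirac s) t x * π x a * r x a) := by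
    intro t
    have A : (∑ x, ∑ a, stateDist T π p t x * π x a * r x a)
        = ∑ s, p s * ∑ x, ∑ a, stateDist T π (dirac s) t x * π x a * r x a := by
      simp_rw [stateDist_linear T π p t, Finset.sum_mul, Finset.mul_sum, mul_assoc]
      exact sum_comm3 _
    rw [A, Finset.mul_sum]
    exact Finset.sum_congr rfl fun s _ => by ring
  simp_rw [key]
  rw [Summable.tsum_finsetSum (fun s _ => Summable.mul_left (p s)
    (value_summable T π (dirac s) r hγ0 hγ1 (dirac_nonneg s) (dirac_sum s) hπ0 hπ1 hT0 hT1))]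
  exact Finset.sum_congr rfl fun s _ => tsum_mul_left

lemma tvDist_nonneg [Fintype S] (P Q : S → ℝ) : 0 ≤ tvDist P Q := by
  unfold tvDist
  positivity

lemma diff_dot_bound [Fintype S] (P Q v : S → ℝ) (C : ℝ) (hv : ∀ s, |v s| ≤ C) :
    |∑ s, (P s - Q s) * v s| ≤ 2 * C * tvDist P Q := by
  calc |∑ s, (P s - Q s) * v s| ≤ ∑ s, |(P s - Q s) * v s| := Finset.abs_sum_le_sum_abs _ _
    _ ≤ ∑ s, |P s - Q s| * C := by
        refine Finset.sum_le_sum fun s _ => ?_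
        rw [abs_mul]
        exact mul_le_mul_of_nonneg_left (hv s) (abs_nonneg _)
    _ = 2 * C * tvDist P Q := by rw [← Finset.sum_mul, tvDist]; ring

lemma step_diff_dot [Fintype S] [Fintype A] (T Tt : S → A → S → ℝ) (π : S → A → ℝ)
    (μ : S → ℝ) (v : S → ℝ) :
    ∑ s', (stepDist T π μ s' - stepDist Tt π μ s') * v s'
      = ∑ s, ∑ a, μ s * π s a * ∑ s', (T s a s' - Tt s a s') * v s' := by
  unfold stepDist
  simp_rw [← Finset.sum_sub_distrib, Finset.sum_mul]
  rw [← sum_comm3 (fun x a s' => (μ x * π x a * T x a s' - μ x * π x a * Tt x a s') * v s')]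
  simp_rw [Finset.mul_sum]
  exact Finset.sum_congr rfl fun x _ => Finset.sum_congr rfl fun a _ =>
    Finset.sum_congr rfl fun s' _ => by ring

/-- Simulation lemma. -/
theorem simulation_lemma [Fintype S] [Fintype A] [DecidableEq S]
    (T Tt : S → A → S → ℝ) (π : S → A → ℝ) (μ0 : S → ℝ) (r : S → A → ℝ)
    (γ C : ℝ) (hγ0 : 0 ≤ γ) (hγ1 : γ < 1)
    (hμ0 : ∀ s, 0 ≤ μ0 s) (hμ1 : ∑ s, μ0 s = 1)
    (hπ0 : ∀ s a, 0 ≤ π s a) (hπ1 : ∀ s, ∑ a, π s a = 1)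
    (hT0 : ∀ s a s', 0 ≤ T s a s') (hT1 : ∀ s a, ∑ s', T s a s' = 1)
    (hTt0 : ∀ s a s', 0 ≤ Tt s a s') (hTt1 : ∀ s a, ∑ s', Tt s a s' = 1)
    (hV : ∀ s : S, |value Tt π (dirac s) r γ| ≤ C) :
    |value T π μ0 r γ - value Tt π μ0 r γ|
      ≤ (2 * C * γ / (1 - γ)) *
          ∑ s, ∑ a, occupancy T π μ0 γ s a * tvDist (T s a) (Tt s a) := by
  have h1γ : (0:ℝ) < 1 - γ := by linarith
  have hSne : Nonempty S := by
    by_contra h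
    rw [not_nonempty_iff] at h
    rw [Finset.univ_eq_empty, Finset.sum_empty] at hμ1
    norm_num at hμ1
  obtain ⟨s0⟩ := hSne
  have hC : 0 ≤ C := le_trans (abs_nonneg _) (hV s0)
  -- the state distributions at time n under T
  have hμn0 : ∀ n s, 0 ≤ stateDist T π μ0 n s := stateDist_nonneg T π μ0 hπ0 hT0 hμ0
  have hμn1 : ∀ n, ∑ s, stateDist T π μ0 n s = 1 := stateDist_sum T π μ0 hπ1 hT1 hμ1
  have hμle1 : ∀ n s, stateDist T π μ0 n s ≤ 1 := by
    intro n s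
    rw [← hμn1 n]
    exact Finset.single_le_sum (fun s _ => hμn0 n s) (Finset.mem_univ s)
  have hπle1 : ∀ s a, π s a ≤ 1 := by
    intro s a
    rw [← hπ1 s]
    exact Finset.single_le_sum (fun a _ => hπ0 s a) (Finset.mem_univ a)
  -- value of any distribution under Tt is bounded by C
  have hVb : ∀ p : S → ℝ, (∀ s, 0 ≤ p s) → (∑ s, p s = 1) → |value Tt π p r γ| ≤ C := by
    intro p hp0 hp1
    rw [value_linear Tt π p r hγ0 hγ1 hπ0 hπ1 hTt0 hTt1]
    exact dist_dot_bound p _ C hp0 hp1 hV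
  -- the four sequences
  set g : ℕ → ℝ := fun n => γ ^ n * value Tt π (stateDist T π μ0 n) r γ with hg_def
  set b : ℕ → ℝ := fun n =>
    γ ^ (n+1) * value Tt π (stepDist Tt π (stateDist T π μ0 n)) r γ with hb_def
  set c : ℕ → ℝ := fun n =>
    γ ^ (n+1) * value Tt π (stepDist T π (stateDist T π μ0 n)) r γ with hc_def
  -- distribution facts for the one-step pushforwards
  have hPT0 : ∀ n s, 0 ≤ stepDist T π (stateDist T π μ0 n) s := fun n =>
    stepDist_nonneg T π _ hπ0 hT0 (hμn0 n)
  have hPT1 : ∀ n, ∑ s, stepDist T π (stateDist T π μ0 n) s = 1 := fun n => by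
    rw [stepDist_sum T π _ hπ1 hT1]; exact hμn1 n
  have hPTt0 : ∀ n s, 0 ≤ stepDist Tt π (stateDist T π μ0 n) s := fun n =>
    stepDist_nonneg Tt π _ hπ0 hTt0 (hμn0 n)
  have hPTt1 : ∀ n, ∑ s, stepDist Tt π (stateDist T π μ0 n) s = 1 := fun n => by
    rw [stepDist_sum Tt π _ hπ1 hTt1]; exact hμn1 n
  -- summability
  have hgS : Summable g := by
    refine summable_geom_of_bound (M := C) hγ0 hγ1 _ (fun n => ?_)
    rw [abs_mul, abs_pow, abs_of_nonneg hγ0, mul_comm]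
    exact mul_le_mul_of_nonneg_right (hVb _ (hμn0 n) (hμn1 n)) (pow_nonneg hγ0 n)
  have hbS : Summable b := by
    refine summable_geom_of_bound (M := C * γ) hγ0 hγ1 _ (fun n => ?_)
    rw [abs_mul, abs_pow, abs_of_nonneg hγ0, pow_succ]
    calc γ ^ n * γ * |value Tt π (stepDist Tt π (stateDist T π μ0 n)) r γ|
        ≤ γ ^ n * γ * C := by
          refine mul_le_mul_of_nonneg_left (hVb _ (hPTt0 n) (hPTt1 n)) ?_
          positivity
      _ = C * γ * γ ^ n := by ring
  have hcS : Summable c := by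
    refine summable_geom_of_bound (M := C * γ) hγ0 hγ1 _ (fun n => ?_)
    rw [abs_mul, abs_pow, abs_of_nonneg hγ0, pow_succ]
    calc γ ^ n * γ * |value Tt π (stepDist T π (stateDist T π μ0 n)) r γ|
        ≤ γ ^ n * γ * C := by
          refine mul_le_mul_of_nonneg_left (hVb _ (hPT0 n) (hPT1 n)) ?_
          positivity
      _ = C * γ * γ ^ n := by ring
  have haS : Summable (fun n => γ ^ n * ∑ s, ∑ a, stateDist T π μ0 n s * π s a * r s a) :=
    value_summable T π μ0 r hγ0 hγ1 hμ0 hμ1 hπ0 hπ1 hT0 hT1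
  -- Bellman decomposition: g n = a n + b n
  have hgab : ∀ n, g n = γ ^ n * (∑ s, ∑ a, stateDist T π μ0 n s * π s a * r s a) + b n := by
    intro n
    simp only [hg_def, hb_def]
    rw [value_bellman Tt π (stateDist T π μ0 n) r hγ0 hγ1 (hμn0 n) (hμn1 n) hπ0 hπ1 hTt0 hTt1]
    ring
  have hgc : ∀ n, g (n + 1) = c n := by
    intro n
    simp only [hg_def, hc_def, stateDist_succ]
  -- the key identity
  have E1 : ∑' n, g n = value Tt π μ0 r γ + ∑' n, c n := by
    rw [Summable.tsum_eq_zero_add hgS]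
    congr 1
    · show γ ^ 0 * value Tt π (stateDist T π μ0 0) r γ = value Tt π μ0 r γ
      rw [pow_zero, one_mul]
      rfl
    · exact tsum_congr hgc
  have E2 : ∑' n, g n
      = value T π μ0 r γ + ∑' n, b n := by
    rw [show value T π μ0 r γ
        = ∑' n, γ ^ n * ∑ s, ∑ a, stateDist T π μ0 n s * π s a * r s a from rfl,
      ← Summable.tsum_add haS hbS]
    exact tsum_congr hgab
  have E3 : value T π μ0 r γ - value Tt π μ0 r γ = ∑' n, (c n - b n) := by
    rw [Summable.tsum_sub hcS hbS]
    linarith [E1, E2]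
  -- pointwise bound on c n - b n
  set D : ℕ → ℝ := fun n => γ ^ (n+1) * ∑ s, ∑ a, stateDist T π μ0 n s * π s a *
      (2 * C * tvDist (T s a) (Tt s a)) with hD_def
  have htv0 : ∀ (s : S) (a : A), 0 ≤ 2 * C * tvDist (T s a) (Tt s a) := fun s a =>
    mul_nonneg (by linarith) (tvDist_nonneg _ _)
  have bound1 : ∀ n, |c n - b n| ≤ D n := by
    intro n
    have hdiff : c n - b n = γ ^ (n+1) * ∑ s, ∑ a, stateDist T π μ0 n s * π s a *
        ∑ s', (T s a s' - Tt s a s') * value Tt π (dirac s') r γ := by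
      simp only [hc_def, hb_def]
      rw [value_linear Tt π (stepDist T π (stateDist T π μ0 n)) r hγ0 hγ1 hπ0 hπ1 hTt0 hTt1,
          value_linear Tt π (stepDist Tt π (stateDist T π μ0 n)) r hγ0 hγ1 hπ0 hπ1 hTt0 hTt1,
          ← mul_sub, ← Finset.sum_sub_distrib]
      rw [show (∑ s, (stepDist T π (stateDist T π μ0 n) s * value Tt π (dirac s) r γ
            - stepDist Tt π (stateDist T π μ0 n) s * value Tt π (dirac s) r γ))
          = ∑ s', (stepDist T π (stateDist T π μ0 n) s'
              - stepDist Tt π (stateDist T π μ0 n) s') * value Tt π (dirac s') r γ from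
        Finset.sum_congr rfl fun s _ => by ring]
      rw [step_diff_dot]
    rw [hdiff, hD_def, abs_mul, abs_pow, abs_of_nonneg hγ0]
    refine mul_le_mul_of_nonneg_left ?_ (pow_nonneg hγ0 (n+1))
    refine le_trans (Finset.abs_sum_le_sum_abs _ _) ?_
    refine Finset.sum_le_sum fun s _ => le_trans (Finset.abs_sum_le_sum_abs _ _) ?_
    refine Finset.sum_le_sum fun a _ => ?_
    rw [abs_mul, abs_of_nonneg (mul_nonneg (hμn0 n s) (hπ0 s a))]
    exact mul_le_mul_of_nonneg_left (diff_dot_bound (T s a) (Tt s a) _ C hV)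
      (mul_nonneg (hμn0 n s) (hπ0 s a))
  -- summability of the dominating sequence
  have hDS : Summable D := by
    refine summable_geom_of_bound
      (M := γ * ∑ s, ∑ a, (2 * C * tvDist (T s a) (Tt s a))) hγ0 hγ1 _ fun n => ?_
    have hD0 : 0 ≤ D n := by
      rw [hD_def]
      refine mul_nonneg (pow_nonneg hγ0 _) (Finset.sum_nonneg fun s _ =>
        Finset.sum_nonneg fun a _ => ?_)
      exact mul_nonneg (mul_nonneg (hμn0 n s) (hπ0 s a)) (htv0 s a)
    rw [abs_of_nonneg hD0, hD_def]
    simp only [pow_succ]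
    have hsle : (∑ s, ∑ a, stateDist T π μ0 n s * π s a * (2 * C * tvDist (T s a) (Tt s a)))
        ≤ ∑ s, ∑ a, (2 * C * tvDist (T s a) (Tt s a)) := by
      refine Finset.sum_le_sum fun s _ => Finset.sum_le_sum fun a _ => ?_
      refine mul_le_of_le_one_left (htv0 s a) ?_
      calc stateDist T π μ0 n s * π s a ≤ 1 * 1 :=
            mul_le_mul (hμle1 n s) (hπle1 s a) (hπ0 s a) zero_le_one
        _ = 1 := by norm_num
    calc γ ^ n * γ * ∑ s, ∑ a, stateDist T π μ0 n s * π s a * (2 * C * tvDist (T s a) (Tt s a))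
        ≤ γ ^ n * γ * ∑ s, ∑ a, (2 * C * tvDist (T s a) (Tt s a)) := by
          refine mul_le_mul_of_nonneg_left hsle ?_
          positivity
      _ = γ * (∑ s, ∑ a, (2 * C * tvDist (T s a) (Tt s a))) * γ ^ n := by ring
  -- per-(s,a) geometric series summability
  have hterm : ∀ (s : S) (a : A), Summable (fun t => γ ^ (t+1) *
      (stateDist T π μ0 t s * π s a * (2 * C * tvDist (T s a) (Tt s a)))) := by
    intro s a
    refine summable_geom_of_bound (M := γ * (2 * C * tvDist (T s a) (Tt s a))) hγ0 hγ1 _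
      fun n => ?_
    have h0 : 0 ≤ stateDist T π μ0 n s * π s a * (2 * C * tvDist (T s a) (Tt s a)) :=
      mul_nonneg (mul_nonneg (hμn0 n s) (hπ0 s a)) (htv0 s a)
    rw [abs_of_nonneg (mul_nonneg (pow_nonneg hγ0 _) h0), pow_succ]
    calc γ ^ n * γ * (stateDist T π μ0 n s * π s a * (2 * C * tvDist (T s a) (Tt s a)))
        ≤ γ ^ n * γ * (1 * (2 * C * tvDist (T s a) (Tt s a))) := by
          refine mul_le_mul_of_nonneg_left (mul_le_mul_of_nonneg_right ?_ (htv0 s a)) ?_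
          · calc stateDist T π μ0 n s * π s a ≤ 1 * 1 :=
                mul_le_mul (hμle1 n s) (hπle1 s a) (hπ0 s a) zero_le_one
              _ = 1 := by norm_num
          · positivity
      _ = γ * (2 * C * tvDist (T s a) (Tt s a)) * γ ^ n := by ring
  have hoccS : ∀ (s : S) (a : A), Summable (fun t => γ ^ t * stateDist T π μ0 t s * π s a) := by
    intro s a
    refine summable_geom_of_bound (M := 1) hγ0 hγ1 _ fun n => ?_
    have h0 : 0 ≤ γ ^ n * stateDist T π μ0 n s * π s a :=
      mul_nonneg (mul_nonneg (pow_nonneg hγ0 n) (hμn0 n s)) (hπ0 s a)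
    rw [abs_of_nonneg h0, one_mul]
    calc γ ^ n * stateDist T π μ0 n s * π s a ≤ γ ^ n * 1 * 1 := by
          refine mul_le_mul (mul_le_mul_of_nonneg_left (hμle1 n s) (pow_nonneg hγ0 n))
            (hπle1 s a) (hπ0 s a) ?_
          positivity
      _ = γ ^ n := by ring
  -- rewrite tsum of D as a finite double sum of tsums
  have hE : ∑' n, D n = ∑ s, ∑ a, ∑' t, γ ^ (t+1) *
      (stateDist T π μ0 t s * π s a * (2 * C * tvDist (T s a) (Tt s a))) := by
    calc ∑' n, D n = ∑' n, ∑ s, ∑ a, γ ^ (n+1) *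
        (stateDist T π μ0 n s * π s a * (2 * C * tvDist (T s a) (Tt s a))) := by
          refine tsum_congr fun n => ?_
          rw [hD_def]
          simp_rw [Finset.mul_sum]
      _ = ∑ s, ∑' n, ∑ a, γ ^ (n+1) *
          (stateDist T π μ0 n s * π s a * (2 * C * tvDist (T s a) (Tt s a))) :=
          Summable.tsum_finsetSum fun s _ => summable_sum fun a _ => hterm s a
      _ = ∑ s, ∑ a, ∑' t, γ ^ (t+1) *
          (stateDist T π μ0 t s * π s a * (2 * C * tvDist (T s a) (Tt s a))) :=
          Finset.sum_congr rfl fun s _ => Summable.tsum_finsetSum fun a _ => hterm s a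
  -- the occupancy expression equals the same double sum of tsums
  have hRHS : (2 * C * γ / (1 - γ)) *
      (∑ s, ∑ a, occupancy T π μ0 γ s a * tvDist (T s a) (Tt s a))
      = ∑ s, ∑ a, ∑' t, γ ^ (t+1) *
          (stateDist T π μ0 t s * π s a * (2 * C * tvDist (T s a) (Tt s a))) := by
    rw [Finset.mul_sum]
    refine Finset.sum_congr rfl fun s _ => ?_
    rw [Finset.mul_sum]
    refine Finset.sum_congr rfl fun a _ => ?_
    simp only [occupancy]
    rw [show (2 * C * γ / (1 - γ)) * ((1 - γ) * (∑' t, γ ^ t * stateDist T π μ0 t s * π s a)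
          * tvDist (T s a) (Tt s a))
        = (2 * C * γ) * ((∑' t, γ ^ t * stateDist T π μ0 t s * π s a)
          * tvDist (T s a) (Tt s a)) from by
      rw [div_mul_eq_mul_div, div_eq_iff h1γ.ne']
      ring]
    rw [← tsum_mul_right, ← tsum_mul_left]
    exact tsum_congr fun t => by ring
  -- final chain
  rw [E3, hRHS, ← hE]
  calc |∑' n, (c n - b n)| ≤ ∑' n, |c n - b n| := by
        simpa using norm_tsum_le_tsum_norm (f := fun n => c n - b n)
          (by simpa using (hcS.sub hbS).abs)
    _ ≤ ∑' n, D n := Summable.tsum_le_tsum bound1 ((hcS.sub hbS).abs) hDS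
end

section
/- Performance difference lemma (policy improvement): for two stationary policies π and π' in a finite discounted MDP with discount γ ∈ [0,1), V^π(s) - V^{π'}(s) = (1/(1-γ))·E_{(s',a')∼d^π_s}[A^{π'}(s',a')], where d^π_s is the normalized discounted state-action occupancy measure of π started from s, and A^{π'}(s,a) = Q^{π'}(s,a) - V^{π'}(s) is the advantage function of π'. -/
open Finset

variable {S A : Type*}

/-- Value function `V^π(s)`. -/
noncomputable def Vfun [Fintype S] [Fintype A] [DecidableEq S]
    (T : S → A → S → ℝ) (π : S → A → ℝ) (r : S → A → ℝ) (γ : ℝ) : S → ℝ :=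
  fun s => ∑' t : ℕ, γ ^ t * ∑ s', ∑ a, stateDist T π (dirac s) t s' * π s' a * r s' a

/-- State-action value function `Q^π(s,a) = r(s,a) + γ E_{s'∼T}[V^π(s')]`. -/
noncomputable def Qfun [Fintype S] [Fintype A] [DecidableEq S]
    (T : S → A → S → ℝ) (π : S → A → ℝ) (r : S → A → ℝ) (γ : ℝ) : S → A → ℝ :=
  fun s a => r s a + γ * ∑ s', T s a s' * Vfun T π r γ s'

/-- Normalized discounted state-action occupancy measure started from state `s`. -/
noncomputable def occFrom [Fintype S] [Fintype A] [DecidableEq S]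
    (T : S → A → S → ℝ) (π : S → A → ℝ) (γ : ℝ) (s : S) : S → A → ℝ :=
  fun s' a' => (1 - γ) * ∑' t : ℕ, γ ^ t * stateDist T π (dirac s) t s' * π s' a'

/-- Performance difference lemma: `V^π(s) - V^{π'}(s)` equals `1/(1-γ)` times the
expected advantage of `π'` under the occupancy measure of `π` started at `s`. -/
theorem performance_difference_lemma [Fintype S] [Fintype A] [DecidableEq S]
    (T : S → A → S → ℝ) (π π' : S → A → ℝ) (r : S → A → ℝ) (γ : ℝ)
    (hγ0 : 0 ≤ γ) (hγ1 : γ < 1)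
    (hπ0 : ∀ s a, 0 ≤ π s a) (hπ1 : ∀ s, ∑ a, π s a = 1)
    (hπ'0 : ∀ s a, 0 ≤ π' s a) (hπ'1 : ∀ s, ∑ a, π' s a = 1)
    (hT0 : ∀ s a s', 0 ≤ T s a s') (hT1 : ∀ s a, ∑ s', T s a s' = 1) :
    ∀ s : S, Vfun T π r γ s - Vfun T π' r γ s
      = (1 / (1 - γ)) * ∑ s', ∑ a',
          occFrom T π γ s s' a' * (Qfun T π' r γ s' a' - Vfun T π' r γ s') := by
  intro s
  have hγne : (1 : ℝ) - γ ≠ 0 := by linarith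
  set V' : S → ℝ := Vfun T π' r γ with hV'def
  set Q : S → A → ℝ := Qfun T π' r γ with hQdef
  set μ : ℕ → S → ℝ := stateDist T π (dirac s) with hμdef
  have hstep : ∀ t, μ (t + 1) = stepDist T π (μ t) := by
    intro t
    simp [hμdef, stateDist, Function.iterate_succ_apply']
  have hnn : ∀ t s', 0 ≤ μ t s' := by
    intro t
    induction t with
    | zero =>
      intro s'
      simp only [hμdef, stateDist, Function.iterate_zero, id_eq, dirac]
      split <;> norm_num
    | succ n ih =>
      intro s'
      rw [hstep n]
      refine Finset.sum_nonneg fun s0 _ => Finset.sum_nonneg fun a _ => ?_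
      exact mul_nonneg (mul_nonneg (ih s0) (hπ0 s0 a)) (hT0 s0 a s')
  have hsum1 : ∀ t, ∑ s', μ t s' = 1 := by
    intro t
    induction t with
    | zero =>
      simp [hμdef, stateDist, dirac]
    | succ n ih =>
      have h1 : ∑ s', μ (n + 1) s' = ∑ s0, ∑ a, ∑ s', μ n s0 * π s0 a * T s0 a s' := by
        rw [hstep n]
        show ∑ s', ∑ s0, ∑ a, μ n s0 * π s0 a * T s0 a s' = _
        rw [Finset.sum_comm]
        exact Finset.sum_congr rfl fun s0 _ => Finset.sum_comm
      rw [h1]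
      have h2 : ∀ s0 ∈ (Finset.univ : Finset S), ∀ a ∈ (Finset.univ : Finset A),
          ∑ s', μ n s0 * π s0 a * T s0 a s' = μ n s0 * π s0 a := by
        intro s0 _ a _
        rw [← Finset.mul_sum, hT1 s0 a, mul_one]
      rw [Finset.sum_congr rfl fun s0 hs0 => Finset.sum_congr rfl (h2 s0 hs0)]
      simp only [← Finset.mul_sum, hπ1, mul_one]
      exact ih
  have hle1 : ∀ t s', μ t s' ≤ 1 := by
    intro t s'
    calc μ t s' ≤ ∑ s'', μ t s'' :=
          Finset.single_le_sum (fun i _ => hnn t i) (Finset.mem_univ s')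
      _ = 1 := hsum1 t
  have hπle1 : ∀ s' a', π s' a' ≤ 1 := by
    intro s' a'
    calc π s' a' ≤ ∑ a, π s' a :=
          Finset.single_le_sum (fun i _ => hπ0 s' i) (Finset.mem_univ a')
      _ = 1 := hπ1 s'
  have hsummable : ∀ (c : ℕ → ℝ) (C : ℝ), (∀ t, |c t| ≤ C) →
      Summable (fun t => γ ^ t * c t) := by
    intro c C hc
    refine Summable.of_norm_bounded (g := fun t => C * γ ^ t)
      (((summable_geometric_of_lt_one hγ0 hγ1)).mul_left C) (fun t => ?_)
    rw [Real.norm_eq_abs, abs_mul, abs_pow, abs_of_nonneg hγ0, mul_comm]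
    exact mul_le_mul_of_nonneg_right (hc t) (pow_nonneg hγ0 t)
  have habs : ∀ (t : ℕ) (f : S → ℝ), |∑ s', μ t s' * f s'| ≤ ∑ s', |f s'| := by
    intro t f
    calc |∑ s', μ t s' * f s'| ≤ ∑ s', |μ t s' * f s'| := Finset.abs_sum_le_sum_abs _ _
      _ ≤ ∑ s', |f s'| := by
          refine Finset.sum_le_sum fun s' _ => ?_
          rw [abs_mul, abs_of_nonneg (hnn t s')]
          exact mul_le_of_le_one_left (abs_nonneg _) (hle1 t s')
  set g : ℕ → ℝ := fun t => ∑ s', μ t s' * V' s' with hgdef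
  set Rπ : ℕ → ℝ := fun t => ∑ s', ∑ a, μ t s' * π s' a * r s' a with hRdef
  set CV : ℝ := ∑ s', |V' s'| with hCVdef
  have hgbound : ∀ t, |g t| ≤ CV := fun t => habs t V'
  have hRbound : ∀ t, |Rπ t| ≤ ∑ s', |∑ a, π s' a * r s' a| := by
    intro t
    have hre : Rπ t = ∑ s', μ t s' * ∑ a, π s' a * r s' a := by
      refine Finset.sum_congr rfl fun s' _ => ?_
      rw [Finset.mul_sum]
      exact Finset.sum_congr rfl fun a _ => by ring
    rw [hre]
    exact habs t _
  set A' : ℕ → ℝ := fun t => γ ^ t * Rπ t with hAdef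
  set hh : ℕ → ℝ := fun t => γ ^ t * g t with hhdef
  have hsumA : Summable A' := hsummable Rπ _ hRbound
  have hsumh : Summable hh := hsummable g CV hgbound
  have hsumh1 : Summable (fun t => hh (t + 1)) := by
    have hs : Summable (fun t => γ ^ t * (γ * g (t + 1))) := by
      refine hsummable (fun t => γ * g (t + 1)) CV (fun t => ?_)
      rw [abs_mul, abs_of_nonneg hγ0]
      calc γ * |g (t + 1)| ≤ 1 * |g (t + 1)| :=
            mul_le_mul_of_nonneg_right (le_of_lt hγ1) (abs_nonneg _)
        _ = |g (t + 1)| := one_mul _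
        _ ≤ CV := hgbound (t + 1)
    refine hs.congr fun t => ?_
    simp only [hhdef]
    rw [pow_succ]
    ring
  have hh0 : hh 0 = V' s := by
    simp only [hhdef, hgdef, pow_zero, one_mul]
    have hd : ∀ s', μ 0 s' = dirac s s' := fun s' => rfl
    simp only [hd, dirac]
    simp
  have hg1 : ∀ t, g (t + 1) = ∑ s', ∑ a', μ t s' * π s' a' * ∑ s'', T s' a' s'' * V' s'' := by
    intro t
    show (∑ s'', μ (t + 1) s'' * V' s'') = _
    rw [hstep t]
    show (∑ s'', (∑ s', ∑ a', μ t s' * π s' a' * T s' a' s'') * V' s'') = _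
    simp only [Finset.sum_mul]
    rw [Finset.sum_comm]
    refine Finset.sum_congr rfl fun s' _ => ?_
    rw [Finset.sum_comm]
    refine Finset.sum_congr rfl fun a' _ => ?_
    rw [Finset.mul_sum]
    exact Finset.sum_congr rfl fun s'' _ => by ring
  have hgt : ∀ t, g t = ∑ s', ∑ a', μ t s' * π s' a' * V' s' := by
    intro t
    refine Finset.sum_congr rfl fun s' _ => ?_
    have he : (∑ a', μ t s' * π s' a' * V' s') = (μ t s' * V' s') * ∑ a', π s' a' := by
      rw [Finset.mul_sum]
      exact Finset.sum_congr rfl fun a' _ => by ring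
    rw [he, hπ1, mul_one]
  have key : ∀ t, (∑ s', ∑ a', μ t s' * π s' a' * (Q s' a' - V' s'))
      = Rπ t + γ * g (t + 1) - g t := by
    intro t
    have hQe : ∀ s' a', Q s' a' = r s' a' + γ * ∑ s'', T s' a' s'' * V' s'' := fun s' a' => rfl
    have expand : ∀ s' a', μ t s' * π s' a' * (Q s' a' - V' s')
        = μ t s' * π s' a' * r s' a'
          + γ * (μ t s' * π s' a' * ∑ s'', T s' a' s'' * V' s'')
          - μ t s' * π s' a' * V' s' := by
      intro s' a'
      rw [hQe]
      ring
    calc (∑ s', ∑ a', μ t s' * π s' a' * (Q s' a' - V' s'))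
        = ∑ s', ∑ a', (μ t s' * π s' a' * r s' a'
            + γ * (μ t s' * π s' a' * ∑ s'', T s' a' s'' * V' s'')
            - μ t s' * π s' a' * V' s') :=
          Finset.sum_congr rfl fun s' _ => Finset.sum_congr rfl fun a' _ => expand s' a'
      _ = (∑ s', ∑ a', μ t s' * π s' a' * r s' a')
            + γ * (∑ s', ∑ a', μ t s' * π s' a' * ∑ s'', T s' a' s'' * V' s'')
            - ∑ s', ∑ a', μ t s' * π s' a' * V' s' := by
          simp only [Finset.sum_add_distrib, Finset.sum_sub_distrib, Finset.mul_sum]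
      _ = Rπ t + γ * g (t + 1) - g t := by rw [← hg1 t, ← hgt t]
  set F : ℕ → ℝ := fun t => γ ^ t * ∑ s', ∑ a', μ t s' * π s' a' * (Q s' a' - V' s')
    with hFdef
  have hF : ∀ t, F t = A' t + (hh (t + 1) - hh t) := by
    intro t
    simp only [hFdef, hAdef, hhdef, key t, pow_succ]
    ring
  have hsumdiff : Summable (fun t => hh (t + 1) - hh t) := hsumh1.sub hsumh
  have hsumF : Summable F := (hsumA.add hsumdiff).congr fun t => (hF t).symm
  have htsumF : ∑' t, F t = (∑' t, A' t) - V' s := by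
    have e1 : ∑' t, F t = (∑' t, A' t) + ∑' t, (hh (t + 1) - hh t) := by
      rw [← Summable.tsum_add hsumA hsumdiff]
      exact tsum_congr hF
    have e2 : ∑' t, (hh (t + 1) - hh t) = (∑' t, hh (t + 1)) - ∑' t, hh t :=
      Summable.tsum_sub hsumh1 hsumh
    have e3 : (∑' t, hh t) = hh 0 + ∑' t, hh (t + 1) := Summable.tsum_eq_zero_add hsumh
    rw [hh0] at e3
    rw [e1, e2]
    linarith [e3]
  have hVπ : Vfun T π r γ s = ∑' t, A' t := rfl
  have hocc : ∀ (s' : S) (a' : A),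
      occFrom T π γ s s' a' * (Q s' a' - V' s')
        = (1 - γ) * ∑' t, (γ ^ t * μ t s' * π s' a') * (Q s' a' - V' s') := by
    intro s' a'
    have ho : occFrom T π γ s s' a' = (1 - γ) * ∑' t, γ ^ t * μ t s' * π s' a' := rfl
    rw [ho, mul_assoc, ← tsum_mul_right]
  have hsumocc : ∀ (s' : S) (a' : A),
      Summable (fun t => (γ ^ t * μ t s' * π s' a') * (Q s' a' - V' s')) := by
    intro s' a'
    have hs : Summable (fun t => γ ^ t * (μ t s' * π s' a' * (Q s' a' - V' s'))) := by
      refine hsummable _ (|Q s' a' - V' s'|) (fun t => ?_)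
      rw [abs_mul, abs_mul, abs_of_nonneg (hnn t s'), abs_of_nonneg (hπ0 s' a')]
      calc μ t s' * π s' a' * |Q s' a' - V' s'|
          ≤ 1 * 1 * |Q s' a' - V' s'| := by
            refine mul_le_mul (mul_le_mul (hle1 t s') (hπle1 s' a') (hπ0 s' a')
              zero_le_one) le_rfl (abs_nonneg _) (by norm_num)
        _ = |Q s' a' - V' s'| := by ring
    exact hs.congr fun t => by ring
  have hRHS : (∑ s', ∑ a', occFrom T π γ s s' a' * (Q s' a' - V' s'))
      = (1 - γ) * ∑' t, F t := by
    have step1 : ∀ (s' : S) (a' : A), occFrom T π γ s s' a' * (Q s' a' - V' s')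
        = ∑' t, (1 - γ) * ((γ ^ t * μ t s' * π s' a') * (Q s' a' - V' s')) := by
      intro s' a'
      rw [hocc s' a', ← tsum_mul_left]
    calc (∑ s', ∑ a', occFrom T π γ s s' a' * (Q s' a' - V' s'))
        = ∑ s', ∑ a', ∑' t, (1 - γ) * ((γ ^ t * μ t s' * π s' a') * (Q s' a' - V' s')) :=
          Finset.sum_congr rfl fun s' _ => Finset.sum_congr rfl fun a' _ => step1 s' a'
      _ = ∑ s', ∑' t, ∑ a', (1 - γ) * ((γ ^ t * μ t s' * π s' a') * (Q s' a' - V' s')) := by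
          refine Finset.sum_congr rfl fun s' _ => ?_
          exact (Summable.tsum_finsetSum fun a' _ => ((hsumocc s' a').mul_left (1 - γ))).symm
      _ = ∑' t, ∑ s', ∑ a', (1 - γ) * ((γ ^ t * μ t s' * π s' a') * (Q s' a' - V' s')) := by
          refine (Summable.tsum_finsetSum fun s' _ => ?_).symm
          exact summable_sum fun a' _ => ((hsumocc s' a').mul_left (1 - γ))
      _ = (1 - γ) * ∑' t, F t := by
          rw [← tsum_mul_left]
          refine tsum_congr fun t => ?_
          simp only [hFdef, Finset.mul_sum]
          refine Finset.sum_congr rfl fun s' _ => Finset.sum_congr rfl fun a' _ => ?_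
          ring
  show Vfun T π r γ s - V' s
    = (1 / (1 - γ)) * ∑ s', ∑ a', occFrom T π γ s s' a' * (Q s' a' - V' s')
  rw [hRHS, hVπ, ← htsumF]
  field_simp
end
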